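/- Let Z be a complex n×n matrix with ℓ²-operator norm ‖Z‖ < 1, and let λ₁, …, λₙ be the roots of the characteristic polynomial of Z in ℂ, counted with multiplicity (the eigenvalues of Z). Then each λⱼ satisfies |λⱼ| < 1, and trace L(Z) = ∑_{j=1}^n Log(1 + λⱼ), where Log is the principal branch of the complex logarithm. -/

import Mathlib

open Matrix Complex

noncomputable section

/-- Real `2n × 2n` matrices indexed by `Fin n ⊕ Fin n` (the two blocks). -/
abbrev SpMat (n : ℕ) := Matrix (Fin n ⊕ Fin n) (Fin n ⊕ Fin n) ℝ

/-- The standard skew form `K = ((0,1),(-1,0))`. -/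
def symplK (n : ℕ) : SpMat n := Matrix.fromBlocks 0 1 (-1) 0

/-- The real symplectic group `Sp(2n, ℝ)`: matrices with `gᵀ K g = K`. -/
def Sp (n : ℕ) : Set (SpMat n) := {g | gᵀ * symplK n * g = symplK n}

/-- The matrix `J = (1/√2) ((1, i·1), (i·1, 1))`. -/
def Jmat (n : ℕ) : Matrix (Fin n ⊕ Fin n) (Fin n ⊕ Fin n) ℂ :=
  (Real.sqrt 2 : ℂ)⁻¹ •
    Matrix.fromBlocks 1 (Complex.I • 1) (Complex.I • 1) 1

variable {n : ℕ}

/-- `Φ(g)`: the upper-left `n × n` block of `J⁻¹ g J`. -/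
def Phi (g : SpMat n) : Matrix (Fin n) (Fin n) ℂ :=
  ((Jmat n)⁻¹ * g.map (fun x => (x : ℂ)) * Jmat n).toBlocks₁₁

/-- `Ψ(g)`: the upper-right `n × n` block of `J⁻¹ g J`. -/
def Psi (g : SpMat n) : Matrix (Fin n) (Fin n) ℂ :=
  ((Jmat n)⁻¹ * g.map (fun x => (x : ℂ)) * Jmat n).toBlocks₁₂

/-- Entrywise complex conjugation of a matrix. -/
def conjM (M : Matrix (Fin n) (Fin n) ℂ) : Matrix (Fin n) (Fin n) ℂ :=
  M.map (starRingEnd ℂ)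

/-- The ℓ²-operator norm of a complex matrix. -/
def opNorm (Z : Matrix (Fin n) (Fin n) ℂ) : ℝ :=
  ‖Matrix.toEuclideanCLM (𝕜 := ℂ) Z‖

/-- `L(Z) = ∑_{k ≥ 1} (-1)^{k+1} Z^k / k`, a branch of `log (1 + Z)` for `‖Z‖ < 1`. -/
def matLog (Z : Matrix (Fin n) (Fin n) ℂ) : Matrix (Fin n) (Fin n) ℂ :=
  ∑' k : ℕ, ((-1 : ℂ) ^ k / (k + 1)) • Z ^ (k + 1)

/-- The Berezin cocycle `c(g₁,g₂) = Im tr L(Φ(g₁)⁻¹ Ψ(g₁) conj(Ψ(g₂)) Φ(g₂)⁻¹)`. -/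
def berezinC (g₁ g₂ : SpMat n) : ℝ :=
  (Matrix.trace (matLog ((Phi g₁)⁻¹ * Psi g₁ * conjM (Psi g₂) * (Phi g₂)⁻¹))).im

section Aux

open Polynomial

lemma pow_blockTriangular' {p q : ℕ} (A : Matrix (Fin p) (Fin p) ℂ) (B : Matrix (Fin p) (Fin q) ℂ)
    (D : Matrix (Fin q) (Fin q) ℂ) (m : ℕ) :
    ∃ C', (Matrix.fromBlocks A B 0 D) ^ m = Matrix.fromBlocks (A ^ m) C' 0 (D ^ m) := by
  induction m with
  | zero => exact ⟨0, by simp [Matrix.fromBlocks_one]⟩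
  | succ m ih =>
    obtain ⟨C', hC⟩ := ih
    refine ⟨A ^ m * B + C' * D, ?_⟩
    rw [pow_succ, hC, Matrix.fromBlocks_multiply]
    simp [pow_succ]

lemma trace_fromBlocks' {p q : ℕ} (A : Matrix (Fin p) (Fin p) ℂ) (B : Matrix (Fin p) (Fin q) ℂ)
    (C : Matrix (Fin q) (Fin p) ℂ) (D : Matrix (Fin q) (Fin q) ℂ) :
    (Matrix.fromBlocks A B C D).trace = A.trace + D.trace := by
  simp [Matrix.trace, Fintype.sum_sum_type, Matrix.fromBlocks]

lemma charpoly_fin_one' (A : Matrix (Fin 1) (Fin 1) ℂ) : A.charpoly = X - C (A 0 0) := by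
  rw [Matrix.charpoly, Matrix.det_fin_one, charmatrix_apply_eq]

lemma toMatrix_pow' {V : Type*} [AddCommGroup V] [Module ℂ V] {ι : Type*} [Fintype ι]
    [DecidableEq ι] (b : Module.Basis ι ℂ V) (f : Module.End ℂ V) (k : ℕ) :
    LinearMap.toMatrix b b (f ^ k) = (LinearMap.toMatrix b b f) ^ k := by
  induction k with
  | zero => simp [LinearMap.toMatrix_id b]
  | succ k ih => rw [pow_succ, pow_succ, ← ih, ← LinearMap.toMatrix_mul]

lemma trace_pow_eq_sum_roots' : ∀ (n : ℕ) (Z : Matrix (Fin n) (Fin n) ℂ) (m : ℕ),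
    (Z ^ (m + 1)).trace = (Z.charpoly.roots.map (· ^ (m + 1))).sum := by
  intro n
  induction n with
  | zero =>
    intro Z m
    have h1 : Z.charpoly = 1 := by
      rw [Matrix.charpoly, Matrix.det_isEmpty]
    rw [h1]
    simp [Matrix.trace]
  | succ N IH =>
    intro Z m
    classical
    set V := Fin (N + 1) → ℂ with hV
    let bf : Module.Basis (Fin (N + 1)) ℂ V := Pi.basisFun ℂ (Fin (N + 1))
    set g : Module.End ℂ V := Matrix.toLin bf bf Z with hg
    have hZg : LinearMap.toMatrix bf bf g = Z := LinearMap.toMatrix_toLin bf bf Z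
    obtain ⟨μ, hμ⟩ := Module.End.exists_eigenvalue g
    obtain ⟨v, hv⟩ := hμ.exists_hasEigenvector
    have hv0 : v ≠ 0 := hv.right
    have hgv : g v = μ • v := hv.apply_eq_smul
    have hli : LinearIndepOn ℂ id ({v} : Set V) :=
      LinearIndepOn.singleton hv0
    let b0 : Module.Basis _ ℂ V := Module.Basis.extend hli
    haveI : Fintype (hli.extend (Set.subset_univ ({v} : Set V))) :=
      FiniteDimensional.fintypeBasisIndex b0
    have hcard : Fintype.card (Fin 1 ⊕ Fin N) =
        Fintype.card (hli.extend (Set.subset_univ ({v} : Set V))) := by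
      have h : Module.finrank ℂ V = N + 1 := by
        simp [V, Module.finrank_fintype_fun_eq_card]
      rw [← Module.finrank_eq_card_basis b0, h]
      simp only [Fintype.card_sum, Fintype.card_fin]
      omega
    let e₀ := Fintype.equivOfCardEq hcard
    have hvmem : v ∈ hli.extend (Set.subset_univ ({v} : Set V)) :=
      hli.subset_extend _ rfl
    let x₀ : hli.extend (Set.subset_univ ({v} : Set V)) := ⟨v, hvmem⟩
    let e := e₀.trans (Equiv.swap (e₀ (Sum.inl 0)) x₀)
    let c : Module.Basis (Fin 1 ⊕ Fin N) ℂ V := b0.reindex e.symm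
    have hc0 : c (Sum.inl 0) = v := by
      rw [show c = b0.reindex e.symm from rfl, Module.Basis.reindex_apply, Equiv.symm_symm]
      simp only [e, Equiv.trans_apply, Equiv.swap_apply_left]
      exact Module.Basis.extend_apply_self hli x₀
    set M : Matrix (Fin 1 ⊕ Fin N) (Fin 1 ⊕ Fin N) ℂ := LinearMap.toMatrix c c g with hM
    have hMcol : ∀ i, M (Sum.inr i) (Sum.inl 0) = 0 := by
      intro i
      rw [hM, LinearMap.toMatrix_apply, hc0, hgv]
      simp [← hc0, Module.Basis.repr_self]
    have hM00 : M (Sum.inl 0) (Sum.inl 0) = μ := by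
      rw [hM, LinearMap.toMatrix_apply, hc0, hgv]
      simp [← hc0, Module.Basis.repr_self]
    have h21 : M.toBlocks₂₁ = 0 := by
      ext i j
      have : j = 0 := Subsingleton.elim _ _
      subst this
      exact hMcol i
    have hMblocks : M = Matrix.fromBlocks M.toBlocks₁₁ M.toBlocks₁₂ 0 M.toBlocks₂₂ := by
      rw [← h21, Matrix.fromBlocks_toBlocks]
    have h11 : M.toBlocks₁₁ = μ • (1 : Matrix (Fin 1) (Fin 1) ℂ) := by
      ext i j
      have hi : i = 0 := Subsingleton.elim _ _
      have hj : j = 0 := Subsingleton.elim _ _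
      subst hi; subst hj
      simpa [Matrix.toBlocks₁₁] using hM00
    have hcp : Z.charpoly = M.charpoly := by
      rw [← hZg, LinearMap.charpoly_toMatrix, LinearMap.charpoly_toMatrix]
    have hcpM : M.charpoly = (X - C μ) * M.toBlocks₂₂.charpoly := by
      conv_lhs => rw [hMblocks]
      rw [Matrix.charpoly_fromBlocks_zero₂₁, charpoly_fin_one']
      congr 2
      simpa [Matrix.toBlocks₁₁] using hM00
    have hroots : Z.charpoly.roots = μ ::ₘ M.toBlocks₂₂.charpoly.roots := by
      rw [hcp, hcpM, roots_mul, roots_X_sub_C]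
      · simp
      · exact mul_ne_zero (X_sub_C_ne_zero μ) (Matrix.charpoly_monic _).ne_zero
    have htr : (Z ^ (m + 1)).trace = (M ^ (m + 1)).trace := by
      have h1 : Z ^ (m + 1) = LinearMap.toMatrix bf bf (g ^ (m + 1)) := by
        rw [← hZg, ← toMatrix_pow']
      have h2 : M ^ (m + 1) = LinearMap.toMatrix c c (g ^ (m + 1)) := by
        rw [hM, ← toMatrix_pow']
      rw [h1, h2, ← LinearMap.trace_eq_matrix_trace, ← LinearMap.trace_eq_matrix_trace]
    obtain ⟨C', hC'⟩ := pow_blockTriangular' M.toBlocks₁₁ M.toBlocks₁₂ M.toBlocks₂₂ (m + 1)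
    have : (M ^ (m + 1)).trace = μ ^ (m + 1) + (M.toBlocks₂₂ ^ (m + 1)).trace := by
      conv_lhs => rw [hMblocks]
      rw [hC', trace_fromBlocks']
      congr 1
      rw [h11, _root_.smul_pow, one_pow, Matrix.trace_smul, Matrix.trace_one]
      simp
    rw [htr, this, hroots, IH M.toBlocks₂₂ m]
    simp

lemma eval_charpoly' {n : ℕ} (Z : Matrix (Fin n) (Fin n) ℂ) (t : ℂ) :
    Z.charpoly.eval t = (algebraMap ℂ (Matrix (Fin n) (Fin n) ℂ) t - Z).det := by
  rw [Matrix.charpoly, ← coe_evalRingHom, RingHom.map_det]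
  congr 1
  ext i j
  by_cases h : i = j
  · subst h
    simp [charmatrix_apply_eq, Matrix.algebraMap_matrix_apply]
  · simp [charmatrix_apply_ne _ _ _ h, Matrix.algebraMap_matrix_apply, h, Ne.symm h]

lemma root_mem_spectrum' {n : ℕ} (Z : Matrix (Fin n) (Fin n) ℂ) {lam : ℂ}
    (h : lam ∈ Z.charpoly.roots) : lam ∈ spectrum ℂ Z := by
  rw [spectrum.mem_iff]
  have hroot : Z.charpoly.IsRoot lam := isRoot_of_mem_roots h
  intro hu
  have hdet : IsUnit (algebraMap ℂ (Matrix (Fin n) (Fin n) ℂ) lam - Z).det :=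
    (Matrix.isUnit_iff_isUnit_det _).mp hu
  rw [← eval_charpoly', hroot] at hdet
  exact hdet.ne_zero rfl

lemma root_norm_lt' {n : ℕ} (Z : Matrix (Fin n) (Fin n) ℂ) (hZ : opNorm Z < 1) {lam : ℂ}
    (h : lam ∈ Z.charpoly.roots) : ‖lam‖ < 1 := by
  have hn : n ≠ 0 := by
    rintro rfl
    rw [show Z.charpoly = 1 by rw [Matrix.charpoly, Matrix.det_isEmpty]] at h
    simp at h
  haveI : Nonempty (Fin n) := ⟨⟨0, Nat.pos_of_ne_zero hn⟩⟩
  have hspec : lam ∈ spectrum ℂ (Matrix.toEuclideanCLM (𝕜 := ℂ) Z) := by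
    rw [AlgEquiv.spectrum_eq (Matrix.toEuclideanCLM (𝕜 := ℂ) (n := Fin n)) Z]
    exact root_mem_spectrum' Z h
  calc ‖lam‖ ≤ ‖Matrix.toEuclideanCLM (𝕜 := ℂ) Z‖ := spectrum.norm_le_norm_of_mem hspec
  _ < 1 := hZ

set_option maxHeartbeats 1000000 in
set_option synthInstance.maxHeartbeats 400000 in
lemma hasSum_matLog' {n : ℕ} (Z : Matrix (Fin n) (Fin n) ℂ) (hZ : opNorm Z < 1) :
    HasSum (fun k : ℕ => ((-1 : ℂ) ^ k / (k + 1)) • Z ^ (k + 1)) (matLog Z) := by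
  set A := Matrix.toEuclideanCLM (𝕜 := ℂ) Z with hA
  have hf : Summable (fun k : ℕ => ((-1 : ℂ) ^ k / (k + 1)) • A ^ (k + 1)) := by
    apply Summable.of_norm_bounded (g := fun k => ‖A‖ * ‖A‖ ^ k)
      ((summable_geometric_of_lt_one (norm_nonneg A) hZ).mul_left ‖A‖)
    intro k
    rw [norm_smul ((-1 : ℂ) ^ k / ((k : ℂ) + 1)) (A ^ (k + 1))]
    have h1 : ‖(-1 : ℂ) ^ k / ((k : ℂ) + 1)‖ ≤ 1 := by
      rw [norm_div, norm_pow, norm_neg, norm_one, one_pow]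
      rw [show ((k : ℂ) + 1) = ((k + 1 : ℕ) : ℂ) by push_cast; ring]
      rw [Complex.norm_natCast]
      rw [div_le_one (by positivity)]
      exact_mod_cast Nat.one_le_iff_ne_zero.mpr (Nat.succ_ne_zero k)
    have h2 : ‖A ^ (k + 1)‖ ≤ ‖A‖ ^ (k + 1) := norm_pow_le' A (Nat.succ_pos k)
    calc ‖(-1 : ℂ) ^ k / ((k : ℂ) + 1)‖ * ‖A ^ (k + 1)‖
        ≤ 1 * ‖A‖ ^ (k + 1) := by
          apply mul_le_mul h1 h2 (norm_nonneg _) zero_le_one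
      _ = ‖A‖ * ‖A‖ ^ k := by rw [one_mul, pow_succ, mul_comm]
  let l : (EuclideanSpace ℂ (Fin n) →L[ℂ] EuclideanSpace ℂ (Fin n)) →ₗ[ℂ]
      Matrix (Fin n) (Fin n) ℂ :=
    { toFun := fun x => (Matrix.toEuclideanCLM (𝕜 := ℂ)).symm x
      map_add' := fun x y => map_add _ x y
      map_smul' := fun c x => _root_.map_smul _ c x }
  have hgsum : Summable (fun k : ℕ => ((-1 : ℂ) ^ k / (k + 1)) • Z ^ (k + 1)) := by
    have hmap := hf.hasSum.mapL l.toContinuousLinearMap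
    have heq : ∀ k : ℕ, l.toContinuousLinearMap (((-1 : ℂ) ^ k / (k + 1)) • A ^ (k + 1)) =
        ((-1 : ℂ) ^ k / (k + 1)) • Z ^ (k + 1) := by
      intro k
      simp only [LinearMap.coe_toContinuousLinearMap', l, LinearMap.coe_mk, AddHom.coe_mk]
      rw [_root_.map_smul]
      congr 1
      rw [map_pow, hA, StarAlgEquiv.symm_apply_apply]
    rw [funext heq] at hmap
    exact hmap.summable
  exact hgsum.hasSum

lemma hasSum_scalar_log' (a : ℂ) (ha : ‖a‖ < 1) :
    HasSum (fun k : ℕ => ((-1 : ℂ) ^ k / (k + 1)) * a ^ (k + 1)) (Complex.log (1 + a)) := by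
  have h0 := Complex.hasSum_taylorSeries_log ha
  have h := (hasSum_nat_add_iff
    (f := fun m : ℕ => (-1 : ℂ) ^ (m + 1) * a ^ m / (m : ℂ)) 1).mpr (by simpa using h0)
  have key : ∀ k : ℕ, (-1 : ℂ) ^ (k + 1 + 1) * a ^ (k + 1) / ((k + 1 : ℕ) : ℂ) =
      ((-1 : ℂ) ^ k / (k + 1)) * a ^ (k + 1) := by
    intro k
    push_cast
    rw [pow_succ ((-1 : ℂ)) (k + 1), pow_succ ((-1 : ℂ)) k]
    ring
  rw [funext key] at h
  exact h

lemma hasSum_list_log' (l : List ℂ) (hl : ∀ x ∈ l, ‖x‖ < 1) :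
    HasSum (fun k : ℕ => ((-1 : ℂ) ^ k / (k + 1)) * (l.map (fun x => x ^ (k + 1))).sum)
      ((l.map (fun x => Complex.log (1 + x))).sum) := by
  induction l with
  | nil => simpa using hasSum_zero
  | cons a t ih =>
    have ha : ‖a‖ < 1 := hl a (List.mem_cons_self)
    have h1 := hasSum_scalar_log' a ha
    have ht := ih (fun x hx => hl x (List.mem_cons_of_mem a hx))
    have := h1.add ht
    simpa [mul_add] using this

end Aux

/-- for `‖Z‖ < 1`, the eigenvalues `λⱼ` of `Z` (roots of its characteristic
polynomial, with multiplicity) satisfy `|λⱼ| < 1`, and `tr L(Z) = ∑ⱼ Log (1 + λⱼ)`. -/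
theorem stmt9 (n : ℕ) (Z : Matrix (Fin n) (Fin n) ℂ) (hZ : opNorm Z < 1) :
    (∀ lam ∈ Z.charpoly.roots, ‖lam‖ < 1) ∧
    Matrix.trace (matLog Z) =
      (Z.charpoly.roots.map (fun lam => Complex.log (1 + lam))).sum := by
  constructor
  · intro lam hlam
    simpa using root_norm_lt' Z hZ hlam
  · classical
    set l : List ℂ := Z.charpoly.roots.toList with hldef
    have hcoe : (l : Multiset ℂ) = Z.charpoly.roots := Multiset.coe_toList _
    have hl : ∀ x ∈ l, ‖x‖ < 1 := by
      intro x hx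
      exact root_norm_lt' Z hZ (by rw [← hcoe]; exact hx)
    have h2 := hasSum_list_log' l hl
    have htr : HasSum (fun k : ℕ => ((-1 : ℂ) ^ k / (k + 1)) * (Z ^ (k + 1)).trace)
        (Matrix.trace (matLog Z)) := by
      have hmap := (hasSum_matLog' Z hZ).mapL
        (Matrix.traceLinearMap (Fin n) ℂ ℂ).toContinuousLinearMap
      simpa [Matrix.trace_smul, smul_eq_mul] using hmap
    have heq : ∀ k : ℕ, (Z ^ (k + 1)).trace = (l.map (fun x => x ^ (k + 1))).sum := by
      intro k
      rw [trace_pow_eq_sum_roots' n Z k, ← hcoe]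
      simp
    rw [funext (fun k => by rw [heq k] :
      ∀ k : ℕ, ((-1 : ℂ) ^ k / (k + 1)) * (Z ^ (k + 1)).trace =
        ((-1 : ℂ) ^ k / (k + 1)) * (l.map (fun x => x ^ (k + 1))).sum)] at htr
    rw [htr.unique h2, ← hcoe]
    simp
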